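/- Let 𝒯 be a tree ensemble on ℝ^p and (z^L,z^R) a region. Then Φ(z^L,z^R) = 0 if all cells z enclosed in the region have the same weighted majority class F_𝒯(z), and otherwise Φ(z^L,z^R) = min over features j ∈ {1,…,p} and levels l with z^L_j ≤ l < z^R_j of 1 + max{Φ(z^L,z^R_{jl}), Φ(z^L_{jl},z^R)}. -/

import Mathlib

/-- A decision tree on `ℝ^p`: either a leaf labeled with a class `c : ℕ`,
or an internal node splitting on feature `j` with threshold `t`. -/
inductive DTree (p : ℕ) : Type where
  | leaf (c : ℕ) : DTree p
  | node (j : Fin p) (t : ℝ) (L R : DTree p) : DTree p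

namespace DTree

/-- Evaluation of a decision tree at a point `x : ℝ^p`. -/
noncomputable def eval {p : ℕ} : DTree p → (Fin p → ℝ) → ℕ
  | leaf c, _ => c
  | node j t L R, x => if x j ≤ t then L.eval x else R.eval x

/-- Depth `Φ(T)` of a decision tree. -/
def depth {p : ℕ} : DTree p → ℕ
  | leaf _ => 0
  | node _ _ L R => 1 + max L.depth R.depth

/-- Number of leaves `L(T)` of a decision tree. -/
def leaves {p : ℕ} : DTree p → ℕ
  | leaf _ => 1
  | node _ _ L R => L.leaves + R.leaves

/-- The set of splits `(j, t)` occurring at internal nodes of a tree. -/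
def splits {p : ℕ} : DTree p → Set (Fin p × ℝ)
  | leaf _ => ∅
  | node j t L R => insert (j, t) (L.splits ∪ R.splits)

end DTree

/-- A tree ensemble: a finite nonempty family of decision trees with positive weights. -/
structure Ensemble (p : ℕ) : Type where
  m : ℕ
  m_pos : 0 < m
  tree : Fin m → DTree p
  weight : Fin m → ℝ
  weight_pos : ∀ i, 0 < weight i

namespace Ensemble

/-- Total weight of the trees voting for class `c` at point `x`. -/
noncomputable def score {p : ℕ} (E : Ensemble p) (x : Fin p → ℝ) (c : ℕ) : ℝ :=
  ∑ i ∈ Finset.univ.filter (fun i => (E.tree i).eval x = c), E.weight i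

/-- The decision function of the ensemble: the smallest class maximizing the weighted vote. -/
noncomputable def F {p : ℕ} (E : Ensemble p) (x : Fin p → ℝ) : ℕ :=
  sInf {c : ℕ | ∀ c' : ℕ, E.score x c' ≤ E.score x c}

/-- The set `H j` of thresholds appearing in splits on feature `j` in trees of the ensemble. -/
def H {p : ℕ} (E : Ensemble p) (j : Fin p) : Set ℝ :=
  {t : ℝ | ∃ i, (j, t) ∈ (E.tree i).splits}

end Ensemble

/-- `T` is faithful to the ensemble `E` on the set `S`. -/
def Faithful {p : ℕ} (T : DTree p) (E : Ensemble p) (S : Set (Fin p → ℝ)) : Prop :=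
  ∀ x ∈ S, T.eval x = E.F x
/-- A cell: for each feature `j`, an index in `{0, …, n j}` (0-indexed version of `{1, …, |H_j|+1}`). -/
abbrev Cell {p : ℕ} (n : Fin p → ℕ) : Type := ∀ j, Fin (n j + 1)

/-- The open box `B(z)` associated with a cell `z`, given for each feature `j` the
increasing enumeration `h j : Fin (n j) → ℝ` of the thresholds: `x j` lies strictly above
every threshold of index `< z j` and strictly below every threshold of index `≥ z j`. -/
def Box {p : ℕ} (n : Fin p → ℕ) (h : ∀ j, Fin (n j) → ℝ) (z : Cell n) : Set (Fin p → ℝ) :=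
  {x | ∀ j, (∀ k : Fin (n j), (k : ℕ) < (z j : ℕ) → h j k < x j) ∧
            (∀ k : Fin (n j), (z j : ℕ) ≤ (k : ℕ) → x j < h j k)}

/-- The cell `z` is enclosed in the region `(zL, zR)`. -/
def Encl {p : ℕ} {n : Fin p → ℕ} (zL zR z : Cell n) : Prop :=
  ∀ j, (zL j : ℕ) ≤ (z j : ℕ) ∧ (z j : ℕ) ≤ (zR j : ℕ)

/-- The subset of `ℝ^p` covered by the region `(zL, zR)`: the union of the boxes of the
cells it encloses. -/
def RegionSet {p : ℕ} (n : Fin p → ℕ) (h : ∀ j, Fin (n j) → ℝ) (zL zR : Cell n) :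
    Set (Fin p → ℝ) :=
  ⋃ z ∈ {z : Cell n | Encl zL zR z}, Box n h z

/-- `Φ(zL, zR)`: the minimum depth of a decision tree faithful to `E` on the region `(zL, zR)`. -/
noncomputable def Phi {p : ℕ} (E : Ensemble p) (n : Fin p → ℕ) (h : ∀ j, Fin (n j) → ℝ)
    (zL zR : Cell n) : ℕ :=
  sInf {d : ℕ | ∃ T : DTree p, Faithful T E (RegionSet n h zL zR) ∧ T.depth = d}

/-- `Λ(zL, zR)`: the minimum number of leaves of a decision tree faithful to `E` on `(zL, zR)`. -/
noncomputable def Lam {p : ℕ} (E : Ensemble p) (n : Fin p → ℕ) (h : ∀ j, Fin (n j) → ℝ)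
    (zL zR : Cell n) : ℕ :=
  sInf {d : ℕ | ∃ T : DTree p, Faithful T E (RegionSet n h zL zR) ∧ T.leaves = d}

/-- `z^R_{jl}`: replace the `j`-th coordinate of `zR` by `l`. -/
def splitR {p : ℕ} {n : Fin p → ℕ} (zR : Cell n) (j : Fin p) (l : Fin (n j)) : Cell n :=
  Function.update zR j l.castSucc

/-- `z^L_{jl}`: replace the `j`-th coordinate of `zL` by `l + 1`. -/
def splitL {p : ℕ} {n : Fin p → ℕ} (zL : Cell n) (j : Fin p) (l : Fin (n j)) : Cell n :=
  Function.update zL j l.succ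

/-- The cells `z` and `z'` have the same (weighted majority) class under `E`. -/
def SameClass {p : ℕ} (E : Ensemble p) (n : Fin p → ℕ) (h : ∀ j, Fin (n j) → ℝ)
    (z z' : Cell n) : Prop :=
  ∀ x ∈ Box n h z, ∀ y ∈ Box n h z', E.F x = E.F y

open Classical in
/-- The indicator `𝟙_{jl}(z^L, z^R)`. -/
noncomputable def ind {p : ℕ} (E : Ensemble p) (n : Fin p → ℕ) (h : ∀ j, Fin (n j) → ℝ)
    (zL zR : Cell n) (j : Fin p) (l : Fin (n j)) : ℕ :=
  if Phi E n h zL (splitR zR j l) = 0 ∧ Phi E n h (splitL zL j l) zR = 0 ∧ SameClass E n h zL zR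
  then 0 else 1


/-! ### Helper lemmas -/

section Helpers

variable {p : ℕ} {n : Fin p → ℕ} {h : ∀ j, Fin (n j) → ℝ}

lemma mem_regionSet {zL zR : Cell n} {x : Fin p → ℝ} :
    x ∈ RegionSet n h zL zR ↔ ∃ z, Encl zL zR z ∧ x ∈ Box n h z := by
  simp [RegionSet, Set.mem_iUnion]

lemma eval_const_of_splits (T : DTree p)
    (hT : ∀ (j : Fin p) (s : ℝ), (j, s) ∈ T.splits → ∃ k : Fin (n j), h j k = s)
    {z : Cell n} {x y : Fin p → ℝ} (hx : x ∈ Box n h z) (hy : y ∈ Box n h z) :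
    T.eval x = T.eval y := by
  induction T with
  | leaf c => rfl
  | node j t L R ihL ihR =>
    obtain ⟨k, hk⟩ := hT j t (by simp [DTree.splits])
    have hcond : (x j ≤ t) ↔ (y j ≤ t) := by
      subst hk
      rcases lt_or_ge (k : ℕ) (z j : ℕ) with hlt | hle
      · have h1 := (hx j).1 k hlt
        have h2 := (hy j).1 k hlt
        constructor <;> intro hh <;> linarith
      · have h1 := (hx j).2 k hle
        have h2 := (hy j).2 k hle
        constructor <;> intro hh <;> linarith
    simp only [DTree.eval]
    by_cases hxy : x j ≤ t
    · rw [if_pos hxy, if_pos (hcond.mp hxy)]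
      exact ihL (fun j' s hs => hT j' s (by simp [DTree.splits]; tauto))
    · rw [if_neg hxy, if_neg (fun hy' => hxy (hcond.mpr hy'))]
      exact ihR (fun j' s hs => hT j' s (by simp [DTree.splits]; tauto))

lemma F_const_on_box (E : Ensemble p) (hcov : ∀ j, E.H j = Set.range (h j))
    {z : Cell n} {x y : Fin p → ℝ} (hx : x ∈ Box n h z) (hy : y ∈ Box n h z) :
    E.F x = E.F y := by
  have hsc : E.score x = E.score y := by
    funext c
    unfold Ensemble.score
    apply Finset.sum_congr _ (fun _ _ => rfl)
    ext i
    simp only [Finset.mem_filter, Finset.mem_univ, true_and]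
    have heq : (E.tree i).eval x = (E.tree i).eval y := by
      refine eval_const_of_splits _ (fun j s hs => ?_) hx hy
      have hmem : s ∈ E.H j := ⟨i, hs⟩
      rw [hcov j] at hmem
      obtain ⟨k, hk⟩ := hmem
      exact ⟨k, hk⟩
    rw [heq]
  unfold Ensemble.F
  rw [hsc]

lemma exists_sep {m : ℕ} (g : Fin m → ℝ) (hg : StrictMono g) (z : Fin (m + 1)) :
    ∃ v : ℝ, (∀ k : Fin m, (k : ℕ) < (z : ℕ) → g k < v) ∧
      (∀ k : Fin m, (z : ℕ) ≤ (k : ℕ) → v < g k) := by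
  rcases Nat.eq_zero_or_pos m with hm | hm
  · exact ⟨0, fun k => absurd k.2 (by omega), fun k => absurd k.2 (by omega)⟩
  by_cases hz0 : (z : ℕ) = 0
  · refine ⟨g ⟨0, hm⟩ - 1, fun k hk => by omega, fun k _ => ?_⟩
    have : g ⟨0, hm⟩ ≤ g k := hg.monotone (by simp [Fin.le_def])
    linarith
  by_cases hzm : (z : ℕ) = m
  · refine ⟨g ⟨m - 1, by omega⟩ + 1, fun k hk => ?_, fun k hk => by
      exact absurd k.2 (by omega)⟩
    have : g k ≤ g ⟨m - 1, by omega⟩ := hg.monotone (by simp [Fin.le_def]; omega)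
    linarith
  · have hz1 : 1 ≤ (z : ℕ) := by omega
    have hzm' : (z : ℕ) < m := by have := z.2; omega
    refine ⟨(g ⟨(z : ℕ) - 1, by omega⟩ + g ⟨(z : ℕ), hzm'⟩) / 2, fun k hk => ?_, fun k hk => ?_⟩
    · have h1 : g k ≤ g ⟨(z : ℕ) - 1, by omega⟩ := hg.monotone (by simp [Fin.le_def]; omega)
      have h2 : g ⟨(z : ℕ) - 1, by omega⟩ < g ⟨(z : ℕ), hzm'⟩ := hg (Fin.mk_lt_mk.mpr (by omega))
      linarith
    · have h1 : g ⟨(z : ℕ), hzm'⟩ ≤ g k := hg.monotone (by simp [Fin.le_def]; omega)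
      have h2 : g ⟨(z : ℕ) - 1, by omega⟩ < g ⟨(z : ℕ), hzm'⟩ := hg (Fin.mk_lt_mk.mpr (by omega))
      linarith

lemma box_nonempty (hmono : ∀ j, StrictMono (h j)) (z : Cell n) :
    ∃ x, x ∈ Box n h z := by
  choose v hv1 hv2 using fun j => exists_sep (h j) (hmono j) (z j)
  exact ⟨v, fun j => ⟨hv1 j, hv2 j⟩⟩

lemma update_mem_box {z : Cell n} {x : Fin p → ℝ} (hx : x ∈ Box n h z) {j : Fin p} {v : ℝ}
    (h1 : ∀ k : Fin (n j), (k : ℕ) < (z j : ℕ) → h j k < v)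
    (h2 : ∀ k : Fin (n j), (z j : ℕ) ≤ (k : ℕ) → v < h j k) :
    Function.update x j v ∈ Box n h z := by
  intro j'
  by_cases hj : j' = j
  · subst hj; simpa using ⟨h1, h2⟩
  · rw [Function.update_of_ne hj]; exact hx j'

lemma splitR_self (zR : Cell n) (j : Fin p) (l : Fin (n j)) :
    ((splitR zR j l) j : ℕ) = (l : ℕ) := by simp [splitR]

lemma splitR_ne (zR : Cell n) {j j' : Fin p} (hjj : j' ≠ j) (l : Fin (n j)) :
    (splitR zR j l) j' = zR j' := by
  simp [splitR, Function.update_of_ne hjj]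

lemma splitL_self (zL : Cell n) (j : Fin p) (l : Fin (n j)) :
    ((splitL zL j l) j : ℕ) = (l : ℕ) + 1 := by simp [splitL]

lemma splitL_ne (zL : Cell n) {j j' : Fin p} (hjj : j' ≠ j) (l : Fin (n j)) :
    (splitL zL j l) j' = zL j' := by
  simp [splitL, Function.update_of_ne hjj]

lemma encl_of_splitR {zL zR : Cell n} {j : Fin p} {l : Fin (n j)} (hl : (l : ℕ) ≤ (zR j : ℕ))
    {z : Cell n} (hz : Encl zL (splitR zR j l) z) : Encl zL zR z := by
  intro j'
  refine ⟨(hz j').1, ?_⟩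
  by_cases hj : j' = j
  · subst hj
    have := (hz j').2
    rw [splitR_self] at this
    omega
  · have := (hz j').2
    rw [splitR_ne _ hj] at this
    exact this

lemma encl_of_splitL {zL zR : Cell n} {j : Fin p} {l : Fin (n j)} (hl : (zL j : ℕ) ≤ (l : ℕ) + 1)
    {z : Cell n} (hz : Encl (splitL zL j l) zR z) : Encl zL zR z := by
  intro j'
  refine ⟨?_, (hz j').2⟩
  by_cases hj : j' = j
  · subst hj
    have := (hz j').1
    rw [splitL_self] at this
    omega
  · have := (hz j').1
    rw [splitL_ne _ hj] at this
    exact this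

end Helpers

section Clamp

variable {p : ℕ}

open Classical in
/-- Simplify a tree under the assumption that coordinate `j` is (virtually) `≤ t`. -/
noncomputable def clampLe (j : Fin p) (t : ℝ) : DTree p → DTree p
  | .leaf c => .leaf c
  | .node j' s L R =>
      if j' = j ∧ t ≤ s then clampLe j t L
      else .node j' s (clampLe j t L) (clampLe j t R)

open Classical in
/-- Simplify a tree under the assumption that coordinate `j` is (virtually) `> t`. -/
noncomputable def clampGt (j : Fin p) (t : ℝ) : DTree p → DTree p
  | .leaf c => .leaf c
  | .node j' s L R =>
      if j' = j ∧ s ≤ t then clampGt j t R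
      else .node j' s (clampGt j t L) (clampGt j t R)

lemma depth_clampLe (j : Fin p) (t : ℝ) (T : DTree p) :
    (clampLe j t T).depth ≤ T.depth := by
  induction T with
  | leaf c => simp [clampLe]
  | node j' s L R ihL ihR =>
    rw [clampLe]
    split
    · calc (clampLe j t L).depth ≤ L.depth := ihL
        _ ≤ 1 + max L.depth R.depth := by omega
    · simp only [DTree.depth]
      omega

lemma depth_clampGt (j : Fin p) (t : ℝ) (T : DTree p) :
    (clampGt j t T).depth ≤ T.depth := by
  induction T with
  | leaf c => simp [clampGt]
  | node j' s L R ihL ihR =>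
    rw [clampGt]
    split
    · calc (clampGt j t R).depth ≤ R.depth := ihR
        _ ≤ 1 + max L.depth R.depth := by omega
    · simp only [DTree.depth]
      omega

lemma eval_clampLe_of_le {j : Fin p} {t : ℝ} (T : DTree p) {x : Fin p → ℝ} (hx : x j ≤ t) :
    (clampLe j t T).eval x = T.eval x := by
  induction T with
  | leaf c => rfl
  | node j' s L R ihL ihR =>
    rw [clampLe]
    split
    · next hc =>
      obtain ⟨hj, hs⟩ := hc
      subst hj
      rw [DTree.eval, if_pos (le_trans hx hs), ihL]
    · simp only [DTree.eval]
      split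
      · exact ihL
      · exact ihR

lemma eval_clampLe_of_gt {j : Fin p} {t : ℝ} (T : DTree p) {x : Fin p → ℝ} (hx : t < x j) :
    (clampLe j t T).eval x = T.eval (Function.update x j t) := by
  induction T with
  | leaf c => rfl
  | node j' s L R ihL ihR =>
    rw [clampLe]
    split
    · next hc =>
      obtain ⟨hj, hs⟩ := hc
      subst hj
      rw [DTree.eval, Function.update_self, if_pos hs, ihL]
    · next hc =>
      by_cases hj : j' = j
      · subst hj
        have hs : s < t := by
          by_contra hcon
          exact hc ⟨rfl, le_of_not_gt hcon⟩
        rw [DTree.eval, DTree.eval, Function.update_self,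
          if_neg (by linarith), if_neg (by linarith), ihR]
      · rw [DTree.eval, DTree.eval, Function.update_of_ne hj]
        split
        · exact ihL
        · exact ihR

lemma eval_clampGt_of_gt {j : Fin p} {t : ℝ} (T : DTree p) {x : Fin p → ℝ} (hx : t < x j) :
    (clampGt j t T).eval x = T.eval x := by
  induction T with
  | leaf c => rfl
  | node j' s L R ihL ihR =>
    rw [clampGt]
    split
    · next hc =>
      obtain ⟨hj, hs⟩ := hc
      subst hj
      rw [DTree.eval, if_neg (by linarith), ihR]
    · simp only [DTree.eval]
      split
      · exact ihL
      · exact ihR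

lemma eval_clampGt_of_le {j : Fin p} {t : ℝ} (T : DTree p) {x : Fin p → ℝ} {v : ℝ}
    (hx : x j ≤ t) (htv : t < v) (hv : ∀ s, (j, s) ∈ T.splits → t < s → v ≤ s) :
    (clampGt j t T).eval x = T.eval (Function.update x j v) := by
  induction T with
  | leaf c => rfl
  | node j' s L R ihL ihR =>
    rw [clampGt]
    split
    · next hc =>
      obtain ⟨hj, hs⟩ := hc
      subst hj
      rw [DTree.eval, Function.update_self, if_neg (by linarith)]
      exact ihR (fun s' hs' => hv s' (by simp [DTree.splits]; tauto))
    · next hc =>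
      by_cases hj : j' = j
      · subst hj
        have hs : t < s := by
          by_contra hcon
          exact hc ⟨rfl, le_of_not_gt hcon⟩
        have hvs : v ≤ s := hv s (by simp [DTree.splits]) hs
        rw [DTree.eval, DTree.eval, Function.update_self,
          if_pos (by linarith), if_pos hvs]
        exact ihL (fun s' hs' => hv s' (by simp [DTree.splits]; tauto))
      · rw [DTree.eval, DTree.eval, Function.update_of_ne hj]
        split
        · exact ihL (fun s' hs' => hv s' (by simp [DTree.splits]; tauto))
        · exact ihR (fun s' hs' => hv s' (by simp [DTree.splits]; tauto))

lemma exists_above (j : Fin p) (t b : ℝ) (htb : t < b) (T : DTree p) :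
    ∃ v, t < v ∧ v < b ∧ ∀ s, (j, s) ∈ T.splits → t < s → v ≤ s := by
  induction T with
  | leaf c => exact ⟨(t + b) / 2, by linarith, by linarith, by simp [DTree.splits]⟩
  | node j' s L R ihL ihR =>
    obtain ⟨vL, hL1, hL2, hL3⟩ := ihL
    obtain ⟨vR, hR1, hR2, hR3⟩ := ihR
    classical
    refine ⟨if t < s then min (min vL vR) s else min vL vR, ?_, ?_, ?_⟩
    · split <;> simp_all [lt_min_iff]
    · split
      · calc min (min vL vR) s ≤ min vL vR := min_le_left _ _
          _ ≤ vL := min_le_left _ _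
          _ < b := hL2
      · calc min vL vR ≤ vL := min_le_left _ _
          _ < b := hL2
    · intro s' hs' hts'
      simp only [DTree.splits, Set.mem_insert_iff, Set.mem_union] at hs'
      rcases hs' with heq | hmem | hmem
      · have hss : s' = s := (Prod.mk.injEq _ _ _ _).mp heq |>.2
        subst hss
        rw [if_pos hts']
        exact le_trans (min_le_right _ _) le_rfl
      · have h1 : vL ≤ s' := hL3 s' hmem hts'
        split
        · exact le_trans (le_trans (min_le_left _ _) (min_le_left _ _)) h1
        · exact le_trans (min_le_left _ _) h1
      · have h1 : vR ≤ s' := hR3 s' hmem hts'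
        split
        · exact le_trans (le_trans (min_le_left _ _) (min_le_right _ _)) h1
        · exact le_trans (min_le_right _ _) h1

end Clamp

section Exists

variable {p : ℕ} {n : Fin p → ℕ} {h : ∀ j, Fin (n j) → ℝ} {E : Ensemble p}

lemma encl_splitR_of {zL zR : Cell n} {j : Fin p} {l : Fin (n j)} {z : Cell n}
    (hz : Encl zL zR z) (hzj : (z j : ℕ) ≤ (l : ℕ)) : Encl zL (splitR zR j l) z := by
  intro j'
  refine ⟨(hz j').1, ?_⟩
  by_cases hj : j' = j
  · subst hj; rw [splitR_self]; exact hzj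
  · rw [splitR_ne _ hj]; exact (hz j').2

lemma encl_splitL_of {zL zR : Cell n} {j : Fin p} {l : Fin (n j)} {z : Cell n}
    (hz : Encl zL zR z) (hzj : (l : ℕ) + 1 ≤ (z j : ℕ)) : Encl (splitL zL j l) zR z := by
  intro j'
  refine ⟨?_, (hz j').2⟩
  by_cases hj : j' = j
  · subst hj; rw [splitL_self]; exact hzj
  · rw [splitL_ne _ hj]; exact (hz j').1

lemma faithful_node {zL zR : Cell n} (j : Fin p) (l : Fin (n j)) {T1 T2 : DTree p}
    (h1 : Faithful T1 E (RegionSet n h zL (splitR zR j l)))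
    (h2 : Faithful T2 E (RegionSet n h (splitL zL j l) zR)) :
    Faithful (DTree.node j (h j l) T1 T2) E (RegionSet n h zL zR) := by
  intro x hx
  obtain ⟨z, hz, hxz⟩ := mem_regionSet.mp hx
  simp only [DTree.eval]
  by_cases hc : x j ≤ h j l
  · rw [if_pos hc]
    refine h1 x (mem_regionSet.mpr ⟨z, encl_splitR_of hz ?_, hxz⟩)
    by_contra hcon
    push_neg at hcon
    have := (hxz j).1 l hcon
    linarith
  · rw [if_neg hc]
    push_neg at hc
    refine h2 x (mem_regionSet.mpr ⟨z, encl_splitL_of hz ?_, hxz⟩)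
    by_contra hcon
    push_neg at hcon
    have := (hxz j).2 l (by omega)
    linarith

lemma exists_faithful (hmono : ∀ j, StrictMono (h j)) (hcov : ∀ j, E.H j = Set.range (h j)) :
    ∀ (N : ℕ) (zL zR : Cell n), (∀ j, (zL j : ℕ) ≤ (zR j : ℕ)) →
      (∑ j, ((zR j : ℕ) - (zL j : ℕ))) ≤ N →
      ∃ T : DTree p, Faithful T E (RegionSet n h zL zR) := by
  intro N
  induction N with
  | zero =>
    intro zL zR hreg hsum
    obtain ⟨x₀, hx₀⟩ := box_nonempty hmono zL
    refine ⟨DTree.leaf (E.F x₀), fun x hx => ?_⟩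
    obtain ⟨z, hz, hxz⟩ := mem_regionSet.mp hx
    have hzz : z = zL := by
      funext j
      have h1 := (hz j).1
      have h2 := (hz j).2
      have h3 : (∑ j, ((zR j : ℕ) - (zL j : ℕ))) = 0 := le_antisymm hsum (Nat.zero_le _)
      have h4 : (zR j : ℕ) - (zL j : ℕ) = 0 :=
        Finset.sum_eq_zero_iff.mp h3 j (Finset.mem_univ j)
      exact Fin.ext (by omega)
    subst hzz
    exact F_const_on_box E hcov hx₀ hxz
  | succ N ih =>
    intro zL zR hreg hsum
    by_cases heq : ∀ j, (zL j : ℕ) = (zR j : ℕ)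
    · obtain ⟨x₀, hx₀⟩ := box_nonempty hmono zL
      refine ⟨DTree.leaf (E.F x₀), fun x hx => ?_⟩
      obtain ⟨z, hz, hxz⟩ := mem_regionSet.mp hx
      have hzz : z = zL := by
        funext j
        have h1 := (hz j).1
        have h2 := (hz j).2
        have h3 := heq j
        exact Fin.ext (by omega)
      subst hzz
      exact F_const_on_box E hcov hx₀ hxz
    · push_neg at heq
      obtain ⟨j, hj⟩ := heq
      have hjlt : (zL j : ℕ) < (zR j : ℕ) := lt_of_le_of_ne (hreg j) hj
      have hjn : (zL j : ℕ) < n j := by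
        have := (zR j).2
        omega
      set l : Fin (n j) := ⟨(zL j : ℕ), hjn⟩ with hl
      have hll : (l : ℕ) = (zL j : ℕ) := rfl
      have hdrop : ∀ (f g : Fin p → ℕ), (f j + 1 ≤ g j) → (∀ j', j' ≠ j → f j' = g j') →
          (∑ j', g j') ≤ N + 1 → (∑ j', f j') ≤ N := by
        intro f g hj1 hne hg
        have h1 := Finset.sum_erase_add Finset.univ f (Finset.mem_univ j)
        have h2 := Finset.sum_erase_add Finset.univ g (Finset.mem_univ j)
        have h3 : (∑ j' ∈ Finset.univ.erase j, f j') = ∑ j' ∈ Finset.univ.erase j, g j' :=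
          Finset.sum_congr rfl (fun x hx => hne x (Finset.ne_of_mem_erase hx))
        omega
      have hreg1 : ∀ j', (zL j' : ℕ) ≤ ((splitR zR j l) j' : ℕ) := by
        intro j'
        by_cases hjj : j' = j
        · subst hjj; rw [splitR_self]
        · rw [splitR_ne _ hjj]; exact hreg j'
      have hreg2 : ∀ j', (((splitL zL j l) j') : ℕ) ≤ (zR j' : ℕ) := by
        intro j'
        by_cases hjj : j' = j
        · subst hjj; rw [splitL_self]; omega
        · rw [splitL_ne _ hjj]; exact hreg j'
      have hsum1 : (∑ j', (((splitR zR j l) j' : ℕ) - (zL j' : ℕ))) ≤ N := by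
        refine hdrop _ _ ?_ (fun j' hjj => by rw [splitR_ne _ hjj]) hsum
        rw [splitR_self]; omega
      have hsum2 : (∑ j', ((zR j' : ℕ) - ((splitL zL j l) j' : ℕ))) ≤ N := by
        refine hdrop _ _ ?_ (fun j' hjj => by rw [splitL_ne _ hjj]) hsum
        rw [splitL_self]; omega
      obtain ⟨T1, hT1⟩ := ih zL (splitR zR j l) hreg1 hsum1
      obtain ⟨T2, hT2⟩ := ih (splitL zL j l) zR hreg2 hsum2
      exact ⟨DTree.node j (h j l) T1 T2, faithful_node j l hT1 hT2⟩

end Exists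

section PhiBasic

variable {p : ℕ} {n : Fin p → ℕ} {h : ∀ j, Fin (n j) → ℝ} {E : Ensemble p}

lemma phi_le_depth {zL zR : Cell n} {T : DTree p}
    (hT : Faithful T E (RegionSet n h zL zR)) : Phi E n h zL zR ≤ T.depth :=
  Nat.sInf_le ⟨T, hT, rfl⟩

lemma exists_phi_tree (hmono : ∀ j, StrictMono (h j)) (hcov : ∀ j, E.H j = Set.range (h j))
    {zL zR : Cell n} (hreg : ∀ j, (zL j : ℕ) ≤ (zR j : ℕ)) :
    ∃ T : DTree p, Faithful T E (RegionSet n h zL zR) ∧ T.depth = Phi E n h zL zR := by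
  have hne : {d | ∃ T : DTree p, Faithful T E (RegionSet n h zL zR) ∧ T.depth = d}.Nonempty := by
    obtain ⟨T, hT⟩ := exists_faithful hmono hcov _ zL zR hreg le_rfl
    exact ⟨T.depth, T, hT, rfl⟩
  exact Nat.sInf_mem hne

lemma not_faithful_leaf {zL zR : Cell n}
    (hdiff : ¬ (∀ z z' : Cell n, Encl zL zR z → Encl zL zR z' → SameClass E n h z z'))
    (c : ℕ) : ¬ Faithful (DTree.leaf c) E (RegionSet n h zL zR) := by
  intro hf
  push_neg at hdiff
  obtain ⟨z, z', hz, hz', hne⟩ := hdiff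
  refine hne (fun x hx y hy => ?_)
  have h1 := hf x (mem_regionSet.mpr ⟨z, hz, hx⟩)
  have h2 := hf y (mem_regionSet.mpr ⟨z', hz', hy⟩)
  simp only [DTree.eval] at h1 h2
  rw [← h1, ← h2]

lemma exists_beta {m : ℕ} (g : Fin m → ℝ) (hg : StrictMono g) (t : ℝ) :
    ∃ β : ℕ, β ≤ m ∧ ∀ k : Fin m, g k < t ↔ (k : ℕ) < β := by
  classical
  set A : Finset (Fin m) := Finset.univ.filter (fun k => g k < t) with hA
  by_cases hAne : A.Nonempty
  · refine ⟨((A.max' hAne : Fin m) : ℕ) + 1, by have := (A.max' hAne).2; omega, fun k => ?_⟩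
    constructor
    · intro hk
      have := A.le_max' k (by simp [hA, hk])
      rw [Fin.le_def] at this
      omega
    · intro hk
      have hle : k ≤ A.max' hAne := by rw [Fin.le_def]; omega
      have hmax : g (A.max' hAne) < t := by
        have := A.max'_mem hAne
        simp [hA] at this
        exact this
      exact lt_of_le_of_lt (hg.monotone hle) hmax
  · refine ⟨0, Nat.zero_le _, fun k => ?_⟩
    simp only [Nat.not_lt_zero, iff_false]
    intro hk
    exact hAne ⟨k, by simp [hA, hk]⟩

end PhiBasic

section Lower

variable {p : ℕ} {n : Fin p → ℕ} {h : ∀ j, Fin (n j) → ℝ} {E : Ensemble p}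

lemma phi_lower (hmono : ∀ j, StrictMono (h j)) (hcov : ∀ j, E.H j = Set.range (h j)) :
    ∀ (d : ℕ) (zL zR : Cell n), (∀ j, (zL j : ℕ) ≤ (zR j : ℕ)) →
    ¬ (∀ z z' : Cell n, Encl zL zR z → Encl zL zR z' → SameClass E n h z z') →
    ∀ T : DTree p, Faithful T E (RegionSet n h zL zR) → T.depth ≤ d →
    sInf {v : ℕ | ∃ (j : Fin p) (l : Fin (n j)), (zL j : ℕ) ≤ (l : ℕ) ∧
      (l : ℕ) < (zR j : ℕ) ∧
      v = 1 + max (Phi E n h zL (splitR zR j l)) (Phi E n h (splitL zL j l) zR)} ≤ d := by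
  intro d
  induction d with
  | zero =>
    intro zL zR hreg hdiff T hT hdep
    exfalso
    cases T with
    | leaf c => exact not_faithful_leaf hdiff c hT
    | node j t L R => simp [DTree.depth] at hdep
  | succ d ihd =>
    intro zL zR hreg hdiff T hT hdep
    cases T with
    | leaf c => exact absurd hT (not_faithful_leaf hdiff c)
    | node j t L R =>
      have hdL : L.depth ≤ d := by simp only [DTree.depth] at hdep; omega
      have hdR : R.depth ≤ d := by simp only [DTree.depth] at hdep; omega
      by_cases hLne : ∃ x ∈ RegionSet n h zL zR, x j ≤ t
      swap
      · push_neg at hLne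
        have hRf : Faithful R E (RegionSet n h zL zR) := by
          intro x hx
          have := hT x hx
          rwa [DTree.eval, if_neg (not_le.mpr (hLne x hx))] at this
        exact le_trans (ihd zL zR hreg hdiff R hRf hdR) (by omega)
      by_cases hRne : ∃ x ∈ RegionSet n h zL zR, t < x j
      swap
      · push_neg at hRne
        have hLf : Faithful L E (RegionSet n h zL zR) := by
          intro x hx
          have := hT x hx
          rwa [DTree.eval, if_pos (hRne x hx)] at this
        exact le_trans (ihd zL zR hreg hdiff L hLf hdL) (by omega)
      obtain ⟨xL, hxLS, hxLt⟩ := hLne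
      obtain ⟨xR, hxRS, hxRt⟩ := hRne
      obtain ⟨β, hβn, P1⟩ := exists_beta (h j) (hmono j) t
      have P2 : ∀ k : Fin (n j), β ≤ (k : ℕ) → t ≤ h j k := by
        intro k hk
        by_contra hc
        push_neg at hc
        have := (P1 k).mp hc
        omega
      have hconc : ∀ (l : Fin (n j)), (zL j : ℕ) ≤ (l : ℕ) → (l : ℕ) < (zR j : ℕ) →
          Phi E n h zL (splitR zR j l) ≤ d → Phi E n h (splitL zL j l) zR ≤ d →
          sInf {v : ℕ | ∃ (j : Fin p) (l : Fin (n j)), (zL j : ℕ) ≤ (l : ℕ) ∧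
            (l : ℕ) < (zR j : ℕ) ∧
            v = 1 + max (Phi E n h zL (splitR zR j l)) (Phi E n h (splitL zL j l) zR)} ≤
            d + 1 := by
        intro l hl1 hl2 hp1 hp2
        have hmem : (1 + max (Phi E n h zL (splitR zR j l)) (Phi E n h (splitL zL j l) zR)) ∈
            {v : ℕ | ∃ (j : Fin p) (l : Fin (n j)), (zL j : ℕ) ≤ (l : ℕ) ∧
              (l : ℕ) < (zR j : ℕ) ∧
              v = 1 + max (Phi E n h zL (splitR zR j l)) (Phi E n h (splitL zL j l) zR)} :=
          ⟨j, l, hl1, hl2, rfl⟩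
        have := Nat.sInf_le hmem
        omega
      have hzLβ : (zL j : ℕ) ≤ β := by
        obtain ⟨z, hz, hxz⟩ := mem_regionSet.mp hxLS
        have hzj : (z j : ℕ) ≤ β := by
          by_contra hcon
          push_neg at hcon
          have hβn' : β < n j := by have := (z j).2; omega
          have h1 := (hxz j).1 ⟨β, hβn'⟩ hcon
          have h2 := (P1 ⟨β, hβn'⟩).mp (by linarith)
          have h3 : ((⟨β, hβn'⟩ : Fin (n j)) : ℕ) = β := rfl
          omega
        exact le_trans (hz j).1 hzj
      have hβzR : β ≤ (zR j : ℕ) := by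
        obtain ⟨z, hz, hxz⟩ := mem_regionSet.mp hxRS
        have hzj : β ≤ (z j : ℕ) := by
          by_contra hcon
          push_neg at hcon
          have hzn : (z j : ℕ) < n j := by omega
          have h1 := (hxz j).2 ⟨(z j : ℕ), hzn⟩ le_rfl
          have h2 := (P1 ⟨(z j : ℕ), hzn⟩).mpr hcon
          linarith
        exact le_trans hzj (hz j).2
      have hbelow : ∀ z : Cell n, (z j : ℕ) < β → ∀ x ∈ Box n h z, x j < t := by
        intro z hzj x hx
        have hzn : (z j : ℕ) < n j := by omega
        have h1 := (hx j).2 ⟨(z j : ℕ), hzn⟩ le_rfl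
        have h2 := (P1 ⟨(z j : ℕ), hzn⟩).mpr hzj
        linarith
      by_cases hclean : ∃ hb : β < n j, t = h j ⟨β, hb⟩
      · -- clean split at level β
        obtain ⟨hb, ht⟩ := hclean
        set l : Fin (n j) := ⟨β, hb⟩ with hldef
        have hlv : (l : ℕ) = β := rfl
        have hl2 : β < (zR j : ℕ) := by
          obtain ⟨z, hz, hxz⟩ := mem_regionSet.mp hxRS
          have hzj : β + 1 ≤ (z j : ℕ) := by
            by_contra hcon
            push_neg at hcon
            have h1 := (hxz j).2 l (by omega)
            rw [← ht] at h1
            linarith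
          have := (hz j).2
          omega
        have hLf : Faithful L E (RegionSet n h zL (splitR zR j l)) := by
          intro x hx
          obtain ⟨z, hz, hxz⟩ := mem_regionSet.mp hx
          have hzj : (z j : ℕ) ≤ β := by have := (hz j).2; rwa [splitR_self] at this
          have hxt : x j ≤ t := le_of_lt (by rw [ht]; exact (hxz j).2 l hzj)
          have hxS : x ∈ RegionSet n h zL zR :=
            mem_regionSet.mpr ⟨z, encl_of_splitR (le_of_lt hl2) hz, hxz⟩
          have := hT x hxS
          rwa [DTree.eval, if_pos hxt] at this
        have hRf : Faithful R E (RegionSet n h (splitL zL j l) zR) := by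
          intro x hx
          obtain ⟨z, hz, hxz⟩ := mem_regionSet.mp hx
          have hzj : β + 1 ≤ (z j : ℕ) := by have := (hz j).1; rwa [splitL_self] at this
          have hxt : t < x j := by rw [ht]; exact (hxz j).1 l (by omega)
          have hxS : x ∈ RegionSet n h zL zR :=
            mem_regionSet.mpr ⟨z, encl_of_splitL (by omega) hz, hxz⟩
          have := hT x hxS
          rwa [DTree.eval, if_neg (not_le.mpr hxt)] at this
        exact hconc l hzLβ hl2 (le_trans (phi_le_depth hLf) hdL)
          (le_trans (phi_le_depth hRf) hdR)
      · -- straddle case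
        have Q : ∀ k : Fin (n j), β ≤ (k : ℕ) → t < h j k := by
          intro k hk
          rcases eq_or_lt_of_le (P2 k hk) with heq | hlt
          · exfalso
            rcases Nat.eq_or_lt_of_le hk with hkβ | hkβ'
            · exact hclean ⟨by omega, by rw [heq]; congr 1; exact Fin.ext hkβ.symm⟩
            · have hβn' : β < n j := by omega
              have h1 : t ≤ h j ⟨β, hβn'⟩ := P2 _ le_rfl
              have h2 : h j ⟨β, hβn'⟩ < h j k := hmono j (by rw [Fin.lt_def]; exact hkβ')
              linarith
          · exact hlt
        have habove : ∀ z : Cell n, β < (z j : ℕ) → ∀ x ∈ Box n h z, t < x j := by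
          intro z hzj x hx
          have hβn' : β < n j := by have := (z j).2; omega
          have h1 := (hx j).1 ⟨β, hβn'⟩ hzj
          have h2 := Q ⟨β, hβn'⟩ le_rfl
          linarith
        have hmemupd : ∀ z : Cell n, (z j : ℕ) = β → ∀ x ∈ Box n h z,
            Function.update x j t ∈ Box n h z := by
          intro z hzj x hx
          exact update_mem_box hx (fun k hk => (P1 k).mpr (by omega))
            (fun k hk => Q k (by omega))
        by_cases hβR : β < (zR j : ℕ)
        · -- level l = β
          have hβn' : β < n j := by have := (zR j).2; omega
          set l : Fin (n j) := ⟨β, hβn'⟩ with hldef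
          have hlv : (l : ℕ) = β := rfl
          have hLf : Faithful (clampLe j t L) E (RegionSet n h zL (splitR zR j l)) := by
            intro x hx
            obtain ⟨z, hz, hxz⟩ := mem_regionSet.mp hx
            have hzj : (z j : ℕ) ≤ β := by have := (hz j).2; rwa [splitR_self] at this
            have hxS : x ∈ RegionSet n h zL zR :=
              mem_regionSet.mpr ⟨z, encl_of_splitR (le_of_lt hβR) hz, hxz⟩
            by_cases hxt : x j ≤ t
            · rw [eval_clampLe_of_le L hxt]
              have := hT x hxS
              rwa [DTree.eval, if_pos hxt] at this
            · push_neg at hxt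
              have hzjβ : (z j : ℕ) = β := by
                rcases lt_or_eq_of_le hzj with hlt | heq
                · exact absurd (hbelow z hlt x hxz) (by linarith)
                · exact heq
              have hupd := hmemupd z hzjβ x hxz
              rw [eval_clampLe_of_gt L hxt]
              have h2 := hT _ (mem_regionSet.mpr ⟨z, encl_of_splitR (le_of_lt hβR) hz, hupd⟩)
              rw [DTree.eval, Function.update_self, if_pos le_rfl] at h2
              rw [h2]
              exact F_const_on_box E hcov hupd hxz
          have hRf : Faithful R E (RegionSet n h (splitL zL j l) zR) := by
            intro x hx
            obtain ⟨z, hz, hxz⟩ := mem_regionSet.mp hx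
            have hzj : β + 1 ≤ (z j : ℕ) := by have := (hz j).1; rwa [splitL_self] at this
            have hxt : t < x j := habove z (by omega) x hxz
            have hxS : x ∈ RegionSet n h zL zR :=
              mem_regionSet.mpr ⟨z, encl_of_splitL (by omega) hz, hxz⟩
            have := hT x hxS
            rwa [DTree.eval, if_neg (not_le.mpr hxt)] at this
          exact hconc l hzLβ hβR
            (le_trans (phi_le_depth hLf) (le_trans (depth_clampLe _ _ _) hdL))
            (le_trans (phi_le_depth hRf) hdR)
        · have hβR' : β = (zR j : ℕ) := by omega
          by_cases hLβ : (zL j : ℕ) < β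
          · -- level l = β - 1
            have hβ1 : β - 1 < n j := by omega
            set l : Fin (n j) := ⟨β - 1, hβ1⟩ with hldef
            have hlv : (l : ℕ) = β - 1 := rfl
            have hLf : Faithful L E (RegionSet n h zL (splitR zR j l)) := by
              intro x hx
              obtain ⟨z, hz, hxz⟩ := mem_regionSet.mp hx
              have hzj : (z j : ℕ) ≤ β - 1 := by have := (hz j).2; rwa [splitR_self] at this
              have hxt : x j ≤ t := le_of_lt (hbelow z (by omega) x hxz)
              have hxS : x ∈ RegionSet n h zL zR :=
                mem_regionSet.mpr ⟨z, encl_of_splitR (by omega) hz, hxz⟩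
              have := hT x hxS
              rwa [DTree.eval, if_pos hxt] at this
            have htb : t < (if hbn : β < n j then h j ⟨β, hbn⟩ else t + 1) := by
              split
              · next hbn => exact Q ⟨β, hbn⟩ le_rfl
              · linarith
            obtain ⟨v, hv1, hv2, hv3⟩ := exists_above j t _ htb R
            have hvk : ∀ k : Fin (n j), β ≤ (k : ℕ) → v < h j k := by
              intro k hk
              by_cases hbn : β < n j
              · rw [dif_pos hbn] at hv2
                exact lt_of_lt_of_le hv2 ((hmono j).monotone (by rw [Fin.le_def]; exact hk))
              · exact absurd (by have := k.2; omega : β < n j) hbn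
            have hRf : Faithful (clampGt j t R) E (RegionSet n h (splitL zL j l) zR) := by
              intro x hx
              obtain ⟨z, hz, hxz⟩ := mem_regionSet.mp hx
              have hzj : (z j : ℕ) = β := by
                have h1 := (hz j).1
                rw [splitL_self] at h1
                have h2 := (hz j).2
                simp only [hldef] at h1
                omega
              have hxS : x ∈ RegionSet n h zL zR :=
                mem_regionSet.mpr ⟨z, encl_of_splitL (by omega) hz, hxz⟩
              by_cases hxt : t < x j
              · rw [eval_clampGt_of_gt R hxt]
                have := hT x hxS
                rwa [DTree.eval, if_neg (not_le.mpr hxt)] at this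
              · push_neg at hxt
                rw [eval_clampGt_of_le R hxt hv1 hv3]
                have hupd : Function.update x j v ∈ Box n h z :=
                  update_mem_box hxz
                    (fun k hk => lt_trans ((P1 k).mpr (by omega)) hv1)
                    (fun k hk => hvk k (by omega))
                have h2 := hT _ (mem_regionSet.mpr ⟨z, encl_of_splitL (by omega) hz, hupd⟩)
                rw [DTree.eval, Function.update_self, if_neg (not_le.mpr hv1)] at h2
                rw [h2]
                exact F_const_on_box E hcov hupd hxz
            exact hconc l (by simp [hldef]; omega) (by simp [hldef]; omega)
              (le_trans (phi_le_depth hLf) hdL)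
              (le_trans (phi_le_depth hRf) (le_trans (depth_clampGt _ _ _) hdR))
          · -- zL j = β = zR j : the split is useless, recurse with clamped L
            push_neg at hLβ
            have hLf : Faithful (clampLe j t L) E (RegionSet n h zL zR) := by
              intro x hx
              obtain ⟨z, hz, hxz⟩ := mem_regionSet.mp hx
              have hzj : (z j : ℕ) = β := by
                have h1 := (hz j).1
                have h2 := (hz j).2
                omega
              by_cases hxt : x j ≤ t
              · rw [eval_clampLe_of_le L hxt]
                have := hT x hx
                rwa [DTree.eval, if_pos hxt] at this
              · push_neg at hxt
                rw [eval_clampLe_of_gt L hxt]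
                have hupd := hmemupd z hzj x hxz
                have h2 := hT _ (mem_regionSet.mpr ⟨z, hz, hupd⟩)
                rw [DTree.eval, Function.update_self, if_pos le_rfl] at h2
                rw [h2]
                exact F_const_on_box E hcov hupd hxz
            exact le_trans
              (ihd zL zR hreg hdiff _ hLf (le_trans (depth_clampLe _ _ _) hdL)) (by omega)

end Lower

/-- **DP recursion.** `Φ(zL, zR) = 0` if all cells enclosed in the region have
the same weighted majority class; otherwise `Φ(zL, zR)` equals the minimum, over features `j`
and levels `l` with `zL j ≤ l < zR j`, of `1 + max{Φ(zL, zR_{jl}), Φ(zL_{jl}, zR)}`. -/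
theorem phi_recursion {p : ℕ} (E : Ensemble p) (n : Fin p → ℕ) (h : ∀ j, Fin (n j) → ℝ)
    (hmono : ∀ j, StrictMono (h j)) (hcov : ∀ j, E.H j = Set.range (h j))
    (zL zR : Cell n) (hreg : ∀ j, (zL j : ℕ) ≤ (zR j : ℕ)) :
    ((∀ z z' : Cell n, Encl zL zR z → Encl zL zR z' → SameClass E n h z z') →
      Phi E n h zL zR = 0) ∧
    (¬ (∀ z z' : Cell n, Encl zL zR z → Encl zL zR z' → SameClass E n h z z') →
      Phi E n h zL zR =
        sInf {v : ℕ | ∃ (j : Fin p) (l : Fin (n j)), (zL j : ℕ) ≤ (l : ℕ) ∧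
          (l : ℕ) < (zR j : ℕ) ∧
          v = 1 + max (Phi E n h zL (splitR zR j l)) (Phi E n h (splitL zL j l) zR)}) := by
  constructor
  · intro hsame
    obtain ⟨x₀, hx₀⟩ := box_nonempty hmono zL
    have hf : Faithful (DTree.leaf (E.F x₀)) E (RegionSet n h zL zR) := by
      intro x hx
      obtain ⟨z, hz, hxz⟩ := mem_regionSet.mp hx
      have henclL : Encl zL zR zL := fun j => ⟨le_rfl, hreg j⟩
      exact (hsame z zL hz henclL x hxz x₀ hx₀).symm
    have h0 := phi_le_depth hf
    simp only [DTree.depth] at h0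
    omega
  · intro hdiff
    apply le_antisymm
    · have hd2 := hdiff
      push_neg at hd2
      obtain ⟨z, z', hz, hz', hnsc⟩ := hd2
      have hzz : z ≠ z' := by
        rintro rfl
        exact hnsc (fun x hx y hy => F_const_on_box E hcov hx hy)
      have hj : ∃ j, (z j : ℕ) ≠ (z' j : ℕ) := by
        by_contra hcon
        push_neg at hcon
        exact hzz (funext fun j => Fin.ext (hcon j))
      obtain ⟨j, hj⟩ := hj
      have hne : Set.Nonempty {v : ℕ | ∃ (j : Fin p) (l : Fin (n j)), (zL j : ℕ) ≤ (l : ℕ) ∧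
          (l : ℕ) < (zR j : ℕ) ∧
          v = 1 + max (Phi E n h zL (splitR zR j l)) (Phi E n h (splitL zL j l) zR)} := by
        rcases lt_or_gt_of_ne hj with hlt | hgt
        · have hjn : (z j : ℕ) < n j := by
            have := (z' j).2
            omega
          refine ⟨_, j, ⟨(z j : ℕ), hjn⟩, (hz j).1, ?_, rfl⟩
          have h1 := (hz' j).2
          have h2 : ((⟨(z j : ℕ), hjn⟩ : Fin (n j)) : ℕ) = (z j : ℕ) := rfl
          omega
        · have hjn : (z' j : ℕ) < n j := by
            have := (z j).2
            omega
          refine ⟨_, j, ⟨(z' j : ℕ), hjn⟩, (hz' j).1, ?_, rfl⟩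
          have h1 := (hz j).2
          have h2 : ((⟨(z' j : ℕ), hjn⟩ : Fin (n j)) : ℕ) = (z' j : ℕ) := rfl
          omega
      obtain ⟨j', l, hl1, hl2, hveq⟩ := Nat.sInf_mem hne
      rw [hveq]
      have hreg1 : ∀ j'', (zL j'' : ℕ) ≤ ((splitR zR j' l) j'' : ℕ) := by
        intro j''
        by_cases hjj : j'' = j'
        · subst hjj; rw [splitR_self]; exact hl1
        · rw [splitR_ne _ hjj]; exact hreg j''
      have hreg2 : ∀ j'', (((splitL zL j' l) j'') : ℕ) ≤ (zR j'' : ℕ) := by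
        intro j''
        by_cases hjj : j'' = j'
        · subst hjj; rw [splitL_self]; omega
        · rw [splitL_ne _ hjj]; exact hreg j''
      obtain ⟨T1, hT1f, hT1d⟩ := exists_phi_tree hmono hcov hreg1
      obtain ⟨T2, hT2f, hT2d⟩ := exists_phi_tree hmono hcov hreg2
      have hb := phi_le_depth (faithful_node j' l hT1f hT2f)
      simp only [DTree.depth] at hb
      omega
    · obtain ⟨T, hTf, hTd⟩ := exists_phi_tree hmono hcov hreg
      exact phi_lower hmono hcov (Phi E n h zL zR) zL zR hreg hdiff T hTf (le_of_eq hTd)
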